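/- Let C be a triangulated category with shift functor T and M a rigid full subcategory (Hom_C(M, TM') = 0 for all M, M' ∈ M). Then (T⁻¹M ∗ M)/M ≃ mod M, where T⁻¹M ∗ M is the full subcategory of objects X fitting in a triangle T⁻¹M1 → X → M0 → M1 with M0, M1 ∈ M. -/

import Mathlib

open CategoryTheory CategoryTheory.Limits CategoryTheory.Pretriangulated Opposite ZeroObject

universe v u v' u' v'' u''

/-- `f` factors through an object belonging to `B`. -/
def FactorsThru {A : Type u''} [Category.{v''} A] (B : Set A) {X Y : A} (f : X ⟶ Y) : Prop :=
  ∃ (Z : A) (_ : Z ∈ B) (g : X ⟶ Z) (h : Z ⟶ Y), g ≫ h = f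

variable {C : Type u} [Category.{v} C] [Preadditive C] [HasZeroObject C]

/-- The full subcategory on a set of objects. -/
abbrev Subcat (𝓜 : Set C) := ObjectProperty.FullSubcategory (fun X : C => X ∈ 𝓜)

/-- The functor `X ↦ Hom_C(−, X)|_𝓜`, the restricted preadditive Yoneda embedding. -/
def resYoneda (𝓜 : Set C) : C ⥤ ((Subcat 𝓜)ᵒᵖ ⥤ AddCommGrpCat.{v}) :=
  preadditiveYoneda ⋙
    (Functor.whiskeringLeft _ _ _).obj (ObjectProperty.ι (fun X : C => X ∈ 𝓜)).op

/-- A contravariant additive functor `F` (an `M`-module) is finitely presented if it is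
the cokernel of a morphism between representable functors, i.e. there are `A B : M`,
`h : A ⟶ B` and `π : Hom(−,B) ⟶ F` such that
`Hom(−,A) ⟶ Hom(−,B) ⟶ F ⟶ 0` is exact. -/
def FinPres {M : Type u'} [Category.{v'} M] [Preadditive M]
    (F : Mᵒᵖ ⥤ AddCommGrpCat.{v'}) : Prop :=
  ∃ (A B : M) (h : A ⟶ B) (π : preadditiveYoneda.obj B ⟶ F),
    (∀ m : M, Function.Surjective (π.app (op m))) ∧
    (∀ (m : M) (x : (preadditiveYoneda.obj B).obj (op m)),
      π.app (op m) x = 0 ↔ ∃ y, (preadditiveYoneda.map h).app (op m) y = x)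

/-- `mod M`: the category of finitely presented contravariant additive functors
`M → Ab`. -/
abbrev ModCat (M : Type u') [Category.{v'} M] [Preadditive M] :=
  ObjectProperty.FullSubcategory (fun F : Mᵒᵖ ⥤ AddCommGrpCat.{v'} => F.Additive ∧ FinPres F)

variable [HasShift C ℤ] [∀ n : ℤ, (shiftFunctor C n).Additive] [Pretriangulated C]

variable (𝓜 : Set C)

/-- The subcategory `T⁻¹𝓜 ∗ 𝓜` of objects `X` fitting in a distinguished triangle
`T⁻¹M1 ⟶ X ⟶ M0 ⟶ M1` with `M0, M1 ∈ 𝓜`. -/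
def invShiftStar : Set C :=
  {X | ∃ M0 M1 : C, M0 ∈ 𝓜 ∧ M1 ∈ 𝓜 ∧
    ∃ (f : M1⟦(-1 : ℤ)⟧ ⟶ X) (g : X ⟶ M0) (h : M0 ⟶ (M1⟦(-1 : ℤ)⟧)⟦(1 : ℤ)⟧),
      Triangle.mk f g h ∈ distTriang C}

/-- The hom relation on `T⁻¹𝓜 ∗ 𝓜` identifying morphisms whose difference factors
through an object of `𝓜`; its quotient is `(T⁻¹𝓜 ∗ 𝓜)/𝓜`. -/
def invShiftStarRel : HomRel (Subcat (invShiftStar 𝓜)) :=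
  fun {X Y} (f g : X ⟶ Y) =>
    FactorsThru 𝓜 (X := X.obj) (Y := Y.obj) (f.hom - g.hom)

-- ============ AUX ============
set_option linter.unusedSectionVars false

@[simp] lemma resYoneda_map_app {V W : C} (w : V ⟶ W) (m : (Subcat 𝓜)ᵒᵖ)
    (ψ : (resYoneda 𝓜).obj V |>.obj m) :
    ((resYoneda 𝓜).map w).app m ψ = (ψ : m.unop.obj ⟶ V) ≫ w := rfl

@[simp] lemma resYoneda_obj_map (V : C) {m m' : (Subcat 𝓜)ᵒᵖ} (β : m ⟶ m')
    (ψ : (resYoneda 𝓜).obj V |>.obj m) :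
    ((resYoneda 𝓜).obj V).map β ψ =
      β.unop.hom ≫ (ψ : m.unop.obj ⟶ V) := rfl

/-- postcomposition from a representable on the subcategory to a restricted representable -/
@[simps]
def yonedaToRes (B : Subcat 𝓜) {V : C} (w : B.obj ⟶ V) :
    preadditiveYoneda.obj B ⟶ (resYoneda 𝓜).obj V where
  app m := AddCommGrpCat.ofHom (AddMonoidHom.mk' (fun α => (show m.unop ⟶ B from α).hom ≫ w)
    (fun _ _ => Preadditive.add_comp _ _ _ _ _ _))
  naturality m m' β := by
    ext α
    exact Category.assoc _ _ _

@[simp] lemma yonedaToRes_app_apply (B : Subcat 𝓜) {V : C} (w : B.obj ⟶ V)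
    (m : (Subcat 𝓜)ᵒᵖ) (α : (preadditiveYoneda.obj B).obj m) :
    (yonedaToRes 𝓜 B w).app m α = (show m.unop ⟶ B from α).hom ≫ w := rfl

lemma exists_presTri {X : C} (hX : X ∈ invShiftStar 𝓜) :
    ∃ (M0 M1 : C) (_ : M0 ∈ 𝓜) (_ : M1 ∈ 𝓜) (g : X ⟶ M0) (h : M0 ⟶ M1)
      (δ : M1 ⟶ X⟦(1 : ℤ)⟧), Triangle.mk g h δ ∈ distTriang C := by
  obtain ⟨M0, M1, h0, h1, f, g, h, hT⟩ := hX
  let e : (M1⟦(-1 : ℤ)⟧)⟦(1 : ℤ)⟧ ≅ M1 := (shiftEquiv C (1 : ℤ)).counitIso.app M1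
  refine ⟨M0, M1, h0, h1, g, h ≫ e.hom, e.inv ≫ (-f⟦(1 : ℤ)⟧'), ?_⟩
  refine isomorphic_distinguished _ (rot_of_distTriang _ hT) _ ?_
  exact Triangle.isoMk _ _ (Iso.refl _) (Iso.refl _) e.symm (by exact (by simp : g ≫ 𝟙 M0 = 𝟙 X ≫ g))
    (by exact (by simp : (h ≫ e.hom) ≫ e.inv = 𝟙 M0 ≫ h))
    (by exact (by simp : (e.inv ≫ (-f⟦(1 : ℤ)⟧')) ≫ (𝟙 X)⟦(1 : ℤ)⟧' = e.inv ≫ (-f⟦(1 : ℤ)⟧')))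

instance resYoneda_obj_additive (V : C) : ((resYoneda 𝓜).obj V).Additive :=
  inferInstanceAs ((ObjectProperty.ι (fun X : C => X ∈ 𝓜)).op ⋙
    preadditiveYoneda.obj V).Additive

section
variable {𝓜}
variable (rigid : ∀ ⦃m m' : C⦄, m ∈ 𝓜 → m' ∈ 𝓜 → ∀ φ : m ⟶ m'⟦(1 : ℤ)⟧, φ = 0)

include rigid in
lemma exists_lift {X M0 M1 : C} (h0 : M0 ∈ 𝓜) {g : X ⟶ M0} {h : M0 ⟶ M1}
    {δ : M1 ⟶ X⟦(1 : ℤ)⟧} (hT : Triangle.mk g h δ ∈ distTriang C) {m : C} (hm : m ∈ 𝓜)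
    (ψ : m ⟶ X⟦(1 : ℤ)⟧) : ∃ α : m ⟶ M1, α ≫ δ = ψ := by
  have h0' : ψ ≫ (Triangle.mk g h δ).rotate.mor₃ = 0 := by
    show ψ ≫ (-g⟦(1 : ℤ)⟧') = 0
    rw [Preadditive.comp_neg, rigid hm h0 (ψ ≫ g⟦(1 : ℤ)⟧'), neg_zero]
  obtain ⟨α, hα⟩ := Triangle.coyoneda_exact₃ _ (rot_of_distTriang _ hT) ψ h0'
  exact ⟨α, hα.symm⟩

include rigid in
lemma finPres_of_presTri {X M0 M1 : C} (h0 : M0 ∈ 𝓜) (h1 : M1 ∈ 𝓜) {g : X ⟶ M0}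
    {h : M0 ⟶ M1} {δ : M1 ⟶ X⟦(1 : ℤ)⟧} (hT : Triangle.mk g h δ ∈ distTriang C) :
    FinPres ((resYoneda 𝓜).obj (X⟦(1 : ℤ)⟧)) := by
  refine ⟨⟨M0, h0⟩, ⟨M1, h1⟩, ⟨h⟩, yonedaToRes 𝓜 ⟨M1, h1⟩ δ, fun m => ?_, fun m x => ?_⟩
  · intro ψ
    obtain ⟨α, hα⟩ := exists_lift rigid h0 hT m.property ψ
    exact ⟨⟨α⟩, hα⟩
  · constructor
    · intro hx
      rw [yonedaToRes_app_apply] at hx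
      obtain ⟨y, hy⟩ := Triangle.coyoneda_exact₃ _ hT (show m ⟶ (⟨M1, h1⟩ : Subcat 𝓜) from x).hom hx
      exact ⟨⟨y⟩, InducedCategory.hom_ext hy.symm⟩
    · rintro ⟨y, rfl⟩
      rw [yonedaToRes_app_apply]
      show ((show m ⟶ (⟨M0, h0⟩ : Subcat 𝓜) from y).hom ≫ h) ≫ δ = 0
      rw [Category.assoc, show h ≫ δ = 0 from comp_distTriang_mor_zero₂₃ _ hT,
        Limits.comp_zero]

end

section
variable {𝓜}
variable (rigid : ∀ ⦃m m' : C⦄, m ∈ 𝓜 → m' ∈ 𝓜 → ∀ φ : m ⟶ m'⟦(1 : ℤ)⟧, φ = 0)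

/-- The functor `X ↦ Hom(−, X⟦1⟧)|𝓜`. -/
noncomputable def Gfun : Subcat (invShiftStar 𝓜) ⥤ ModCat (Subcat 𝓜) where
  obj X := ⟨(resYoneda 𝓜).obj ((X.obj)⟦(1 : ℤ)⟧), inferInstance, by
    obtain ⟨M0, M1, h0, h1, g, h, δ, hT⟩ := exists_presTri 𝓜 X.property
    exact finPres_of_presTri rigid h0 h1 hT⟩
  map {X Y} f := ⟨(resYoneda 𝓜).map (f.hom⟦(1 : ℤ)⟧')⟩
  map_id X := by
    apply ObjectProperty.hom_ext
    show (resYoneda 𝓜).map _ = 𝟙 _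
    rw [show (𝟙 X : X ⟶ X).hom = 𝟙 X.obj from rfl, CategoryTheory.Functor.map_id,
      CategoryTheory.Functor.map_id]
  map_comp {X Y Z} f g := by
    apply ObjectProperty.hom_ext
    show (resYoneda 𝓜).map _ = (resYoneda 𝓜).map _ ≫ (resYoneda 𝓜).map _
    rw [← Functor.map_comp, ← Functor.map_comp]
    rfl

lemma Gfun_map_rel {X Y : Subcat (invShiftStar 𝓜)} {f g : X ⟶ Y}
    (hrel : invShiftStarRel 𝓜 f g) : (Gfun rigid).map f = (Gfun rigid).map g := by
  obtain ⟨Z, hZ, a, b, hab⟩ := hrel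
  apply ObjectProperty.hom_ext
  show (resYoneda 𝓜).map _ = (resYoneda 𝓜).map _
  ext m ψ
  obtain ⟨ψ, rfl⟩ : ∃ ψ' : m.unop.obj ⟶ X.obj⟦(1 : ℤ)⟧, ψ' = ψ := ⟨ψ, rfl⟩
  change ψ ≫ f.hom⟦(1 : ℤ)⟧' = ψ ≫ g.hom⟦(1 : ℤ)⟧'
  rw [← sub_eq_zero, ← Preadditive.comp_sub, ← Functor.map_sub]
  rw [← hab,
    Functor.map_comp, ← Category.assoc, rigid m.unop.property hZ (ψ ≫ a⟦(1 : ℤ)⟧'),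
    Limits.zero_comp]

lemma Gfun_rel_of_map_eq {X Y : Subcat (invShiftStar 𝓜)} {f g : X ⟶ Y}
    (hfg : (Gfun rigid).map f = (Gfun rigid).map g) : invShiftStarRel 𝓜 f g := by
  obtain ⟨M0, M1, h0, h1, gX, h, δ, hT⟩ := exists_presTri 𝓜 X.property
  set d : X.obj ⟶ Y.obj := f.hom - g.hom with hd
  have hres : ∀ (m : (Subcat 𝓜)ᵒᵖ) (ψ : m.unop.obj ⟶ X.obj⟦(1 : ℤ)⟧),
      ψ ≫ d⟦(1 : ℤ)⟧' = 0 := by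
    intro m ψ
    have h1' := ConcreteCategory.congr_hom (NatTrans.congr_app
      (show (resYoneda 𝓜).map (f.hom⟦(1 : ℤ)⟧')
          = (resYoneda 𝓜).map (g.hom⟦(1 : ℤ)⟧') from (by have := congrArg InducedCategory.Hom.hom hfg; exact this)) m) ψ
    rw [hd, Functor.map_sub, Preadditive.comp_sub]
    exact sub_eq_zero.mpr h1'
  have hδ : (Triangle.mk gX h δ).rotate.mor₂ ≫ d⟦(1 : ℤ)⟧' = 0 := hres (op ⟨M1, h1⟩) δ
  obtain ⟨k, hk⟩ : ∃ k : M0⟦(1 : ℤ)⟧ ⟶ Y.obj⟦(1 : ℤ)⟧, d⟦(1 : ℤ)⟧' = (-gX⟦(1 : ℤ)⟧') ≫ k :=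
    Triangle.yoneda_exact₃ _ (rot_of_distTriang _ hT) (d⟦(1 : ℤ)⟧') hδ
  refine ⟨M0, h0, gX, (shiftFunctor C (1 : ℤ)).preimage (-k), ?_⟩
  apply (shiftFunctor C (1 : ℤ)).map_injective
  rw [Functor.map_comp, Functor.map_preimage]
  rw [show (shiftFunctor C (1 : ℤ)).map (f.hom - g.hom) = d⟦(1 : ℤ)⟧' from rfl, hk]
  simp [Triangle.rotate]

lemma natTrans_app_naturality {F G : (Subcat 𝓜)ᵒᵖ ⥤ AddCommGrpCat.{v}} (φ : F ⟶ G)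
    {m m' : (Subcat 𝓜)ᵒᵖ} (β : m ⟶ m') (x : F.obj m) :
    φ.app m' (F.map β x) = G.map β (φ.app m x) :=
  ConcreteCategory.congr_hom (φ.naturality β) x

lemma res_naturality₂ {V W : C} (φ : (resYoneda 𝓜).obj V ⟶ (resYoneda 𝓜).obj W)
    {m m' : Subcat 𝓜} (β : m' ⟶ m) (ψ : m.obj ⟶ V) :
    φ.app (op m') (β.hom ≫ ψ)
      = β.hom ≫ (φ.app (op m) ψ : m.obj ⟶ W) :=
  natTrans_app_naturality φ β.op ψ

lemma Gfun_full {X Y : Subcat (invShiftStar 𝓜)}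
    (φ : (Gfun rigid).obj X ⟶ (Gfun rigid).obj Y) :
    ∃ f : X ⟶ Y, (Gfun rigid).map f = φ := by
  obtain ⟨M0, M1, h0, h1, gX, hX, δ, hTX⟩ := exists_presTri 𝓜 X.property
  obtain ⟨N0, N1, k0, k1, gY, hY, ε, hTY⟩ := exists_presTri 𝓜 Y.property
  let φ' : (resYoneda 𝓜).obj (X.obj⟦(1 : ℤ)⟧) ⟶ (resYoneda 𝓜).obj (Y.obj⟦(1 : ℤ)⟧) := φ.hom
  set φδ : M1 ⟶ Y.obj⟦(1 : ℤ)⟧ := φ'.app (op ⟨M1, h1⟩) δ with hφδ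
  obtain ⟨u, hu⟩ := exists_lift rigid k0 hTY h1 φδ
  have hzero : (hX ≫ u) ≫ ε = 0 := by
    have hnat := res_naturality₂ φ'
      (⟨hX⟩ : (⟨M0, h0⟩ : Subcat 𝓜) ⟶ ⟨M1, h1⟩) δ
    rw [show (⟨hX⟩ : (⟨M0, h0⟩ : Subcat 𝓜) ⟶ ⟨M1, h1⟩).hom ≫ δ = (0 : M0 ⟶ X.obj⟦(1 : ℤ)⟧)
      from comp_distTriang_mor_zero₂₃ _ hTX,
      show (ConcreteCategory.hom (φ'.app (op ⟨M0, h0⟩))) (0 : M0 ⟶ X.obj⟦(1 : ℤ)⟧) = 0 from map_zero _] at hnat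
    rw [Category.assoc, hu, ← hnat]
    rfl
  obtain ⟨v, hv⟩ := Triangle.coyoneda_exact₃ _ hTY (hX ≫ u) hzero
  obtain ⟨w, hw₁, hw₂⟩ := complete_distinguished_triangle_morphism
    (Triangle.mk gX hX δ).rotate (Triangle.mk gY hY ε).rotate
    (rot_of_distTriang _ hTX) (rot_of_distTriang _ hTY) v u (by exact hv)
  obtain ⟨w, rfl⟩ : ∃ w' : X.obj⟦(1 : ℤ)⟧ ⟶ Y.obj⟦(1 : ℤ)⟧, w' = w := ⟨w, rfl⟩
  refine ⟨⟨(shiftFunctor C (1 : ℤ)).preimage w⟩, ?_⟩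
  apply ObjectProperty.hom_ext
  show (resYoneda 𝓜).map _ = φ'
  rw [show (⟨(shiftFunctor C (1 : ℤ)).preimage w⟩ : X ⟶ Y).hom
      = (shiftFunctor C (1 : ℤ)).preimage w from rfl, Functor.map_preimage]
  ext m ψ
  obtain ⟨α, hα⟩ := exists_lift rigid h0 hTX m.unop.property ψ
  have hnat := res_naturality₂ φ'
    (⟨α⟩ : m.unop ⟶ (⟨M1, h1⟩ : Subcat 𝓜)) δ
  have hδw : δ ≫ w = u ≫ ε := hw₁
  show (ψ : m.unop.obj ⟶ X.obj⟦(1 : ℤ)⟧) ≫ w = φ'.app m ψ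
  rw [← hα, show φ'.app m (α ≫ δ) = α ≫ φδ from hnat, Category.assoc, hδw, hu]

lemma Gfun_essSurj (Fb : ModCat (Subcat 𝓜)) :
    ∃ X : Subcat (invShiftStar 𝓜), Nonempty ((Gfun rigid).obj X ≅ Fb) := by
  obtain ⟨A, B, h, π, hsurj, hker⟩ := Fb.property.2
  obtain ⟨Cn, g, δ, hT⟩ := distinguished_cocone_triangle h.hom
  -- membership of `Cn⟦-1⟧`
  have hmem : Cn⟦(-1 : ℤ)⟧ ∈ invShiftStar 𝓜 := by
    refine ⟨A.obj, B.obj, A.property, B.property,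
      ((Triangle.mk h.hom g δ).invRotate).invRotate.mor₁,
      ((Triangle.mk h.hom g δ).invRotate).invRotate.mor₂,
      ((Triangle.mk h.hom g δ).invRotate).invRotate.mor₃, ?_⟩
    exact inv_rot_of_distTriang _ (inv_rot_of_distTriang _ hT)
  set χ : preadditiveYoneda.obj B ⟶ (resYoneda 𝓜).obj Cn := yonedaToRes 𝓜 B g with hχ
  -- χ is constant on the fibers of π
  have key : ∀ (m : (Subcat 𝓜)ᵒᵖ) (y y' : (preadditiveYoneda.obj B).obj m),
      π.app m y = π.app m y' → χ.app m y = χ.app m y' := by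
    intro m y y' hyy
    have hsub : π.app m (y - y') = 0 := by rw [map_sub, hyy, sub_self]
    obtain ⟨z, hz⟩ := (hker m.unop (y - y')).mp hsub
    have hzero : χ.app m (y - y') = 0 := by
      rw [← hz]
      show ((show m.unop ⟶ A from z).hom ≫ h.hom) ≫ g = 0
      rw [Category.assoc, show h.hom ≫ g = 0 from
        comp_distTriang_mor_zero₁₂ _ hT, Limits.comp_zero]
    rw [map_sub, sub_eq_zero] at hzero
    exact hzero
  -- the comparison morphism Φ : F ⟶ Hom(−, Cn)|𝓜
  set Φ : Fb.obj ⟶ (resYoneda 𝓜).obj Cn :=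
    { app := fun m => AddCommGrpCat.ofHom (AddMonoidHom.mk'
        (fun x => χ.app m (Function.surjInv (hsurj m.unop) x)) (by
          intro x y
          show χ.app m (Function.surjInv (hsurj m.unop) (x + y))
            = χ.app m (Function.surjInv (hsurj m.unop) x)
              + χ.app m (Function.surjInv (hsurj m.unop) y)
          rw [← map_add]
          apply key
          refine (Function.surjInv_eq (hsurj m.unop) _).trans ?_
          rw [map_add]
          rw [show (π.app m) (Function.surjInv (hsurj m.unop) x) = x from
            Function.surjInv_eq (hsurj m.unop) x]
          rw [show (π.app m) (Function.surjInv (hsurj m.unop) y) = y from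
            Function.surjInv_eq (hsurj m.unop) y]))
      naturality := by
        intro m m' β
        ext x
        show χ.app m' (Function.surjInv (hsurj m'.unop) (Fb.obj.map β x))
          = ((resYoneda 𝓜).obj Cn).map β (χ.app m (Function.surjInv (hsurj m.unop) x))
        rw [← natTrans_app_naturality χ β]
        apply key
        refine (Function.surjInv_eq (hsurj m'.unop) _).trans ?_
        refine Eq.symm ((natTrans_app_naturality π β _).trans ?_)
        exact congrArg (Fb.obj.map β) (Function.surjInv_eq (hsurj m.unop) x) } with hΦ
  have hbij : ∀ m : (Subcat 𝓜)ᵒᵖ, Function.Bijective (Φ.app m) := by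
    intro m
    constructor
    · rw [injective_iff_map_eq_zero]
      intro x hx
      have hx' : (show m.unop ⟶ B from Function.surjInv (hsurj m.unop) x).hom ≫ g = 0 := hx
      obtain ⟨z, hz⟩ := Triangle.coyoneda_exact₂ _ hT _ hx'
      have : π.app m (Function.surjInv (hsurj m.unop) x) = 0 := by
        refine (hker m.unop _).mpr ⟨⟨z⟩, ?_⟩
        exact InducedCategory.hom_ext hz.symm
      exact ((Function.surjInv_eq (hsurj m.unop) x).symm).trans this
    · intro ψ
      have hψδ : (ψ : m.unop.obj ⟶ Cn) ≫ δ = 0 :=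
        rigid m.unop.property A.property _
      obtain ⟨α, hα⟩ := Triangle.coyoneda_exact₃ _ hT ψ hψδ
      refine ⟨π.app m (show m.unop ⟶ B from ⟨α⟩), ?_⟩
      show χ.app m (Function.surjInv (hsurj m.unop) (π.app m (show m.unop ⟶ B from ⟨α⟩))) = ψ
      refine (key m _ (show m.unop ⟶ B from ⟨α⟩) (Function.surjInv_eq (hsurj m.unop) _)).trans ?_
      exact hα.symm
  have : ∀ m, IsIso (Φ.app m) := by
    intro m
    exact (ConcreteCategory.isIso_iff_bijective _).mpr (hbij m)
  have : IsIso Φ := NatIso.isIso_of_isIso_app Φ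
  refine ⟨⟨Cn⟦(-1 : ℤ)⟧, hmem⟩, ⟨(ObjectProperty.ι _).preimageIso ?_⟩⟩
  exact ((resYoneda 𝓜).mapIso ((shiftEquiv C (1 : ℤ)).counitIso.app Cn)) ≪≫ (asIso Φ).symm

end

/-- Let `C` be a triangulated category with shift `T` and `𝓜` a
rigid full subcategory.  Then `(T⁻¹𝓜 ∗ 𝓜)/𝓜 ≃ mod 𝓜`. -/
theorem stmt15 [IsTriangulated C]
    (rigid : ∀ ⦃m m' : C⦄, m ∈ 𝓜 → m' ∈ 𝓜 → ∀ φ : m ⟶ m'⟦(1 : ℤ)⟧, φ = 0) :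
    Nonempty (CategoryTheory.Quotient (invShiftStarRel 𝓜) ≌ ModCat (Subcat 𝓜)) := by

  let G := Gfun rigid
  let L : CategoryTheory.Quotient (invShiftStarRel 𝓜) ⥤ ModCat (Subcat 𝓜) :=
    CategoryTheory.Quotient.lift _ G (fun X Y f g hr => Gfun_map_rel rigid hr)
  haveI hfull : L.Full := by
    constructor
    intro X Y φ
    obtain ⟨f, hf⟩ := Gfun_full rigid (X := X.as) (Y := Y.as) φ
    exact ⟨(CategoryTheory.Quotient.functor _).map f, by
      rw [CategoryTheory.Quotient.lift_map_functor_map]; exact hf⟩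
  haveI hfaith : L.Faithful := by
    constructor
    intro X Y f g hfg
    obtain ⟨f₀, rfl⟩ := (CategoryTheory.Quotient.functor _).map_surjective f
    obtain ⟨g₀, rfl⟩ := (CategoryTheory.Quotient.functor _).map_surjective g
    rw [CategoryTheory.Quotient.lift_map_functor_map,
      CategoryTheory.Quotient.lift_map_functor_map] at hfg
    exact CategoryTheory.Quotient.sound _ (Gfun_rel_of_map_eq rigid hfg)
  haveI hes : L.EssSurj := by
    constructor
    intro Fb
    obtain ⟨X, ⟨e⟩⟩ := Gfun_essSurj rigid Fb
    exact ⟨(CategoryTheory.Quotient.functor _).obj X, ⟨e⟩⟩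
  haveI : L.IsEquivalence := { }
  exact ⟨L.asEquivalence⟩
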